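/- Let n ≥ 2 be an integer and let p ∈ (0,1), δ ∈ (0,1), r > 0. Set ξ = (1−δ(1−p))/(δp) and define V^1 = r(ξ^{n−1}−1)/(ξ^n−1) and V^k = r(1 − (ξ−1)ξ^{k−2}/(ξ^n−1)) for k = 2,…,n. Then 0 < V^1 < V^n < V^{n−1} < ⋯ < V^3 < V^2 < r; that is, V^1 > 0, V^1 < V^n, V^{k+1} < V^k for each k = 2,…,n−1, and V^2 < r. -/

import Mathlib

/-- Ordering of the closed-form solution of the cyclic rotation system:
`0 < V¹ < Vⁿ < V^{n-1} < ⋯ < V³ < V² < r`. -/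
theorem stmt_3 (n : ℕ) (hn : 2 ≤ n) (p δ r : ℝ)
    (hp : p ∈ Set.Ioo (0 : ℝ) 1) (hδ : δ ∈ Set.Ioo (0 : ℝ) 1) (hr : 0 < r)
    (ξ : ℝ) (hξ : ξ = (1 - δ * (1 - p)) / (δ * p))
    (V : ℕ → ℝ)
    (hV1 : V 1 = r * (ξ ^ (n - 1) - 1) / (ξ ^ n - 1))
    (hVk : ∀ k, 2 ≤ k → k ≤ n →
        V k = r * (1 - (ξ - 1) * ξ ^ (k - 2) / (ξ ^ n - 1))) :
    0 < V 1 ∧ V 1 < V n ∧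
    (∀ k, 2 ≤ k → k ≤ n - 1 → V (k + 1) < V k) ∧
    V 2 < r := by
  obtain ⟨hp0, hp1⟩ := hp
  obtain ⟨hδ0, hδ1⟩ := hδ
  have hdp : 0 < δ * p := by positivity
  have hξ1 : 1 < ξ := by
    rw [hξ, lt_div_iff₀ hdp]
    nlinarith
  have hξ0 : 0 < ξ := by linarith
  have hpow : ∀ m : ℕ, 1 ≤ m → 1 < ξ ^ m := fun m hm => one_lt_pow₀ hξ1 (by omega)
  have hDn : 0 < ξ ^ n - 1 := sub_pos.mpr (hpow n (by omega))
  have hDn' : ξ ^ n - 1 ≠ 0 := ne_of_gt hDn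
  -- decompose n
  have hn2 : n = (n - 2) + 2 := by omega
  set a := ξ ^ (n - 2) with ha_def
  have ha1 : 1 ≤ a := one_le_pow₀ hξ1.le
  have hxn : ξ ^ n = a * ξ ^ 2 := by conv_lhs => rw [hn2, pow_add]
  have hxn1 : ξ ^ (n - 1) = a * ξ := by
    have h : n - 1 = (n - 2) + 1 := by omega
    rw [h, pow_add, pow_one]
  refine ⟨?_, ?_, ?_, ?_⟩
  · rw [hV1]
    apply div_pos _ hDn
    have := hpow (n - 1) (by omega)
    nlinarith
  · rw [hV1, hVk n (by omega) le_rfl, hxn, hxn1, ← ha_def]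
    have hD : 0 < a * ξ ^ 2 - 1 := by rwa [hxn] at hDn
    have hne : a * ξ ^ 2 - 1 ≠ 0 := ne_of_gt hD
    have key : r * (1 - (ξ - 1) * a / (a * ξ ^ 2 - 1))
        = r * ((a * ξ ^ 2 - 1) - (ξ - 1) * a) / (a * ξ ^ 2 - 1) := by
      rw [one_sub_div hne, mul_div_assoc]
    rw [key]
    apply div_lt_div_of_pos_right _ hD
    nlinarith [mul_pos hr (mul_pos (by linarith : (0:ℝ) < a)
      (by nlinarith : (0:ℝ) < (ξ - 1) ^ 2))]
  · intro k hk2 hkn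
    rw [hVk (k + 1) (by omega) (by omega), hVk k hk2 (by omega)]
    have hk1 : k + 1 - 2 = (k - 2) + 1 := by omega
    have hb : 0 < ξ ^ (k - 2) := pow_pos hξ0 _
    have hlt : (ξ - 1) * ξ ^ (k - 2) < (ξ - 1) * ξ ^ (k + 1 - 2) := by
      rw [hk1, pow_succ]
      nlinarith [mul_pos (mul_pos (sub_pos.mpr hξ1) hb) (sub_pos.mpr hξ1)]
    have hdiv := div_lt_div_of_pos_right hlt hDn
    nlinarith [mul_lt_mul_of_pos_left hdiv hr]
  · rw [hVk 2 le_rfl hn]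
    have h0 : (ξ - 1) * ξ ^ (2 - 2) / (ξ ^ n - 1) > 0 := by
      simp only [Nat.sub_self, pow_zero, mul_one]
      exact div_pos (by linarith) hDn
    nlinarith
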